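/- For every n ≥ 1, the set ⟦⟨start, s_n⟩⟧_IO of outputs of the mtt M_ex in IO-mode on input s_n equals the set of all perfect {f,g}-trees of height 2^n in which any two internal nodes at the same depth carry the same label; in particular, this set has cardinality 2^(2^n). -/
import Mathlib


namespace MttF

/-- Finite ordered trees over a label type `α`. -/
inductive RTree (α : Type) : Type
  | node : α → List (RTree α) → RTree α

namespace RTree

variable {α β : Type}

/-- The root label of a tree. -/
def label : RTree α → α
  | node a _ => a

/-- The list of immediate subtrees of a tree. -/
def children : RTree α → List (RTree α)
  | node _ ts => ts

/-- Relabelling of trees. -/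
def map (f : α → β) : RTree α → RTree β
  | node a ts => node (f a) (ts.attach.map (fun x => map f x.1))
decreasing_by
  have := List.sizeOf_lt_of_mem x.2
  simp only [node.sizeOf_spec]
  omega

/-- A tree is well-formed with respect to a rank function if every node labeled
by a rank-`k` symbol has exactly `k` children. `T_Σ` is the set of well-formed
trees over `Σ`. -/
inductive Wf (rk : α → ℕ) : RTree α → Prop
  | node {a : α} {ts : List (RTree α)} :
      ts.length = rk a → (∀ t ∈ ts, Wf rk t) → Wf rk (node a ts)

/-- `Subtree u t` holds iff `u` is a subtree of `t` (rooted at some node of `t`). -/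
inductive Subtree : RTree α → RTree α → Prop
  | refl (t : RTree α) : Subtree t t
  | step {u c : RTree α} {a : α} {ts : List (RTree α)} :
      c ∈ ts → Subtree u c → Subtree u (node a ts)

end RTree

/-- Labels for output trees with parameters: trees over `Δ ∪ Y`. -/
inductive OLab (Δ : Type) : Type
  | out (d : Δ)
  | param (i : ℕ)

/-- Labels for right-hand sides of mtt rules: trees over `Δ ∪ (Q × X) ∪ Y`
(the second component of a call is the index of the input variable `x`). -/
inductive RLab (Δ Q : Type) : Type
  | out (d : Δ)
  | call (q : Q) (x : ℕ)
  | param (i : ℕ)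

/-- Labels for "semantic" trees over `Δ ∪ (Q × T_Σ) ∪ Y`. -/
inductive SLab (Γ Δ Q : Type) : Type
  | out (d : Δ)
  | call (q : Q) (s : RTree Γ)
  | param (i : ℕ)

/-- Trees over `Δ ∪ Y`. -/
abbrev OT (Δ : Type) := RTree (OLab Δ)
/-- Right-hand side trees over `Δ ∪ (Q × X) ∪ Y`. -/
abbrev Rhs (Δ Q : Type) := RTree (RLab Δ Q)
/-- Trees over `Δ ∪ (Q × T_Σ) ∪ Y`. -/
abbrev ST (Γ Δ Q : Type) := RTree (SLab Γ Δ Q)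

/-- First-order substitution `x_i := ss_i` on a label of a right-hand side
(indices are 0-based; for well-formed rules the index is always in range). -/
def RLab.subst {Γ Δ Q : Type} (ss : List (RTree Γ)) : RLab Δ Q → SLab Γ Δ Q
  | .out d => .out d
  | .param i => .param i
  | .call q x =>
    match ss[x]? with
    | some s => .call q s
    | none => .param x

/-- `r[x_1/s_1, …, x_k/s_k]`. -/
def substX {Γ Δ Q : Type} (ss : List (RTree Γ)) (r : Rhs Δ Q) : ST Γ Δ Q :=
  r.map (RLab.subst ss)

/-- Second-order (parameter) substitution `t[y_1/ts_1, …, y_n/ts_n]`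
(`y` indices are 0-based). -/
def substY {Δ : Type} (ts : List (OT Δ)) : OT Δ → OT Δ
  | .node (.param i) _ => ts.getD i (.node (.param i) [])
  | .node (.out d) us => .node (.out d) (us.attach.map (fun x => substY ts x.1))
decreasing_by
  have := List.sizeOf_lt_of_mem x.2
  simp only [RTree.node.sizeOf_spec]
  omega

/-- The embedding of `T_Δ` into the trees over `Δ ∪ Y`. -/
def embed {Δ : Type} (t : RTree Δ) : OT Δ := t.map OLab.out

variable {Γ Δ Q : Type}

/-- IO (call-by-value, inside-out) semantics: `SemIO rsel u t` holds iff
`t ∈ ⟦u⟧_IO`.  The rules of the transducer are given by a selector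
`rsel q σ ss`: the set of right-hand sides of the `⟨q,σ⟩`-rules that are
applicable when the children of the current input node are `ss` (for a plain
mtt this does not depend on `ss`, cf. `plainSel`). -/
inductive SemIO (rsel : Q → Γ → List (RTree Γ) → Set (Rhs Δ Q)) :
    ST Γ Δ Q → OT Δ → Prop
  | param (i : ℕ) :
      SemIO rsel (.node (.param i) []) (.node (.param i) [])
  | out {d : Δ} {us : List (ST Γ Δ Q)} {ts : List (OT Δ)}
      (hlen : ts.length = us.length)
      (h : ∀ i : Fin us.length, SemIO rsel (us.get i) (ts.get (i.cast hlen.symm))) :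
      SemIO rsel (.node (.out d) us) (.node (.out d) ts)
  | call {q : Q} {σ : Γ} {ss : List (RTree Γ)} {us : List (ST Γ Δ Q)}
      {r : Rhs Δ Q} {t₀ : OT Δ} {ts : List (OT Δ)}
      (hr : r ∈ rsel q σ ss)
      (h₀ : SemIO rsel (substX ss r) t₀)
      (hlen : ts.length = us.length)
      (h : ∀ i : Fin us.length, SemIO rsel (us.get i) (ts.get (i.cast hlen.symm))) :
      SemIO rsel (.node (.call q (.node σ ss)) us) (substY ts t₀)

mutual
/-- OI (call-by-name, outside-in) semantics: `SemOI rsel u t` holds iff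
`t ∈ ⟦u⟧_OI`. -/
inductive SemOI (rsel : Q → Γ → List (RTree Γ) → Set (Rhs Δ Q)) :
    ST Γ Δ Q → OT Δ → Prop
  | param (i : ℕ) :
      SemOI rsel (.node (.param i) []) (.node (.param i) [])
  | out {d : Δ} {us : List (ST Γ Δ Q)} {ts : List (OT Δ)}
      (hlen : ts.length = us.length)
      (h : ∀ i : Fin us.length, SemOI rsel (us.get i) (ts.get (i.cast hlen.symm))) :
      SemOI rsel (.node (.out d) us) (.node (.out d) ts)
  | call {q : Q} {σ : Γ} {ss : List (RTree Γ)} {us : List (ST Γ Δ Q)}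
      {r : Rhs Δ Q} {t₀ : OT Δ} {t : OT Δ}
      (hr : r ∈ rsel q σ ss)
      (h₀ : SemOI rsel (substX ss r) t₀)
      (hs : OISub rsel us t₀ t) :
      SemOI rsel (.node (.call q (.node σ ss)) us) t

/-- OI-substitution: `OISub rsel us t₀ t` holds iff `t ∈ (t₀ ←_OI (⟦us_1⟧_OI, …, ⟦us_n⟧_OI))`,
i.e. `t` is obtained from `t₀` by independently replacing every occurrence of a parameter
`y_i` by some member of `⟦us_i⟧_OI`. -/
inductive OISub (rsel : Q → Γ → List (RTree Γ) → Set (Rhs Δ Q)) :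
    List (ST Γ Δ Q) → OT Δ → OT Δ → Prop
  | param {us : List (ST Γ Δ Q)} {i : ℕ} {t : OT Δ}
      (h : i < us.length) (hsem : SemOI rsel (us.get ⟨i, h⟩) t) :
      OISub rsel us (.node (.param i) []) t
  | out {us : List (ST Γ Δ Q)} {d : Δ} {ts ts' : List (OT Δ)}
      (hlen : ts'.length = ts.length)
      (h : ∀ i : Fin ts.length, OISub rsel us (ts.get i) (ts'.get (i.cast hlen.symm))) :
      OISub rsel us (.node (.out d) ts) (.node (.out d) ts')
end

/-- The rule selector of a plain mtt: the applicable rules do not depend on the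
child subtrees of the current input node. -/
def plainSel (rules : Q → Γ → Set (Rhs Δ Q)) :
    Q → Γ → List (RTree Γ) → Set (Rhs Δ Q) :=
  fun q σ _ => rules q σ

/-- The translation `τ_{IO,M} ⊆ T_Σ × T_Δ` realized in IO mode. -/
def tauIO (rankΓ : Γ → ℕ) (rankΔ : Δ → ℕ)
    (rsel : Q → Γ → List (RTree Γ) → Set (Rhs Δ Q)) (q₀ : Q) :
    Set (RTree Γ × RTree Δ) :=
  {p | p.1.Wf rankΓ ∧ p.2.Wf rankΔ ∧
       SemIO rsel (.node (.call q₀ p.1) []) (embed p.2)}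

/-- The translation `τ_{OI,M} ⊆ T_Σ × T_Δ` realized in OI mode. -/
def tauOI (rankΓ : Γ → ℕ) (rankΔ : Δ → ℕ)
    (rsel : Q → Γ → List (RTree Γ) → Set (Rhs Δ Q)) (q₀ : Q) :
    Set (RTree Γ × RTree Δ) :=
  {p | p.1.Wf rankΓ ∧ p.2.Wf rankΔ ∧
       SemOI rsel (.node (.call q₀ p.1) []) (embed p.2)}

/-- Well-formedness of a right-hand side of a rule of an mtt whose current
input symbol has rank `k` and whose current state has rank `m`: output symbols
have the correct number of children, state calls `⟨q', x_i⟩` have `rank q'`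
children and `i < k`, and parameters `y_j` satisfy `j < m`. -/
inductive RhsWf (rankΔ : Δ → ℕ) (rankQ : Q → ℕ) (k m : ℕ) : Rhs Δ Q → Prop
  | out {d : Δ} {ts : List (Rhs Δ Q)}
      (hlen : ts.length = rankΔ d) (h : ∀ t ∈ ts, RhsWf rankΔ rankQ k m t) :
      RhsWf rankΔ rankQ k m (.node (.out d) ts)
  | call {q : Q} {x : ℕ} {ts : List (Rhs Δ Q)}
      (hx : x < k) (hlen : ts.length = rankQ q)
      (h : ∀ t ∈ ts, RhsWf rankΔ rankQ k m t) :
      RhsWf rankΔ rankQ k m (.node (.call q x) ts)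
  | param {i : ℕ} (hi : i < m) : RhsWf rankΔ rankQ k m (.node (.param i) [])

/-- Well-formedness of a tree over `Δ ∪ (Q × T_Σ) ∪ Y`. -/
inductive STWf (rankΓ : Γ → ℕ) (rankΔ : Δ → ℕ) (rankQ : Q → ℕ) : ST Γ Δ Q → Prop
  | out {d : Δ} {ts : List (ST Γ Δ Q)}
      (hlen : ts.length = rankΔ d) (h : ∀ t ∈ ts, STWf rankΓ rankΔ rankQ t) :
      STWf rankΓ rankΔ rankQ (.node (.out d) ts)
  | call {q : Q} {s : RTree Γ} {ts : List (ST Γ Δ Q)}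
      (hs : s.Wf rankΓ) (hlen : ts.length = rankQ q)
      (h : ∀ t ∈ ts, STWf rankΓ rankΔ rankQ t) :
      STWf rankΓ rankΔ rankQ (.node (.call q s) ts)
  | param (i : ℕ) : STWf rankΓ rankΔ rankQ (.node (.param i) [])

/-- A tree over `Δ ∪ (Q × T_Σ) ∪ Y` is parameter-free if no `y_i` occurs in it. -/
inductive NoParam : ST Γ Δ Q → Prop
  | node {l : SLab Γ Δ Q} {ts : List (ST Γ Δ Q)}
      (hl : ∀ i : ℕ, l ≠ .param i) (h : ∀ t ∈ ts, NoParam t) :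
      NoParam (.node l ts)

/-- A macro tree transducer `M = (Q, Σ, Δ, q₀, R)`.  The alphabets `Γ` (input),
`Δ` (output) and the set `Q` of states are ranked; `q₀` has rank `0`; `rules q σ`
is the (finite) set `R_{q,σ}` of right-hand sides of the `⟨q,σ⟩`-rules, and every
right-hand side is a well-formed tree over `Δ ∪ (Q × X_k) ∪ Y_m`. -/
structure MTT (Γ Δ Q : Type) where
  rankΓ : Γ → ℕ
  rankΔ : Δ → ℕ
  rankQ : Q → ℕ
  q₀ : Q
  q₀_rank : rankQ q₀ = 0
  rules : Q → Γ → Set (Rhs Δ Q)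
  rules_fin : ∀ q σ, (rules q σ).Finite
  rules_wf : ∀ q σ, ∀ r ∈ rules q σ, RhsWf rankΔ rankQ (rankΓ σ) (rankQ q) r

/-- The rule selector of a plain mtt. -/
def MTT.sel (M : MTT Γ Δ Q) : Q → Γ → List (RTree Γ) → Set (Rhs Δ Q) :=
  plainSel M.rules

end MttF
namespace MttF

/-- Input alphabet of `M_ex`: `a` of rank 1 and `e` of rank 0. -/
inductive GE : Type | a | e

def rkGE : GE → ℕ | .a => 1 | .e => 0

/-- Output alphabet of `M_ex`: `f`, `g` of rank 2 and `e` of rank 0. -/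
inductive DE : Type | f | g | e

def rkDE : DE → ℕ | .f => 2 | .g => 2 | .e => 0

/-- States of `M_ex`: `start` of rank 0 and `double` of rank 1. -/
inductive QE : Type | start | double

def rkQE : QE → ℕ | .start => 0 | .double => 1

/-- The rules of `M_ex`:
`⟨start, a(x₁)⟩ → ⟨double, x₁⟩(⟨double, x₁⟩(e))`,
`⟨double, a(x₁)⟩(y₁) → ⟨double, x₁⟩(⟨double, x₁⟩(y₁))`,
`⟨double, e⟩(y₁) → f(y₁,y₁)`, and `⟨double, e⟩(y₁) → g(y₁,y₁)`. -/
def rulesEx : QE → GE → Set (Rhs DE QE)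
  | .start, .a =>
      {.node (.call .double 0) [.node (.call .double 0) [.node (.out .e) []]]}
  | .double, .a =>
      {.node (.call .double 0) [.node (.call .double 0) [.node (.param 0) []]]}
  | .double, .e =>
      {.node (.out .f) [.node (.param 0) [], .node (.param 0) []],
       .node (.out .g) [.node (.param 0) [], .node (.param 0) []]}
  | .start, .e => ∅

/-- The input tree `s_n = a(a(⋯a(e)⋯))` with `n` `a`-nodes. -/
def sN : ℕ → RTree GE
  | 0 => .node .e []
  | n+1 => .node .a [sN n]

/-- `Perfect h t` holds iff `t` is a perfect `{f,g}`-tree of height `h`: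
every leaf is labeled `e` and lies at depth exactly `h`, and every internal
node is labeled `f` or `g` (and has two children). -/
inductive Perfect : ℕ → RTree DE → Prop
  | leaf : Perfect 0 (.node .e [])
  | node {h : ℕ} {d : DE} {l r : RTree DE} (hd : d = .f ∨ d = .g)
      (hl : Perfect h l) (hr : Perfect h r) :
      Perfect (h+1) (.node d [l, r])

/-- The set of labels of the nodes of `t` at depth `d` (the root has depth 0). -/
def labelsAt {α : Type} : ℕ → RTree α → Set α
  | 0, t => {t.label}
  | d+1, .node _ ts => {x | ∃ t ∈ ts, x ∈ labelsAt d t}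

/-! ### Auxiliary development -/

section Aux

open RTree

/-- Labels of inner nodes, indexed by booleans. -/
def lab : Bool → DE := fun b => if b then DE.f else DE.g

lemma lab_inj : Function.Injective lab := by
  intro a b h; cases a <;> cases b <;> simpa [lab] using h

lemma lab_or (b : Bool) : lab b = .f ∨ lab b = .g := by cases b <;> simp [lab]

/-- `plug s bs` is the uniform perfect tree with level labels `bs` and
every leaf equal to `s`. -/
def plug (s : OT DE) : List Bool → OT DE
  | [] => s
  | b :: bs => .node (.out (lab b)) [plug s bs, plug s bs]

/-- The parameter leaf `y₁`. -/
def pY : OT DE := .node (.param 0) []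

/-- The output leaf `e`. -/
def eN : OT DE := .node (.out .e) []

lemma map_node {α β : Type} (f : α → β) (a : α) (ts : List (RTree α)) :
    RTree.map f (.node a ts) = .node (f a) (ts.map (RTree.map f)) := by
  rw [RTree.map]; simp

lemma substY_out {Δ : Type} (ts : List (OT Δ)) (d : Δ) (us : List (OT Δ)) :
    substY ts (.node (.out d) us) = .node (.out d) (us.map (substY ts)) := by
  rw [substY]; simp

lemma substY_plug_pY (s : OT DE) (bs : List Bool) :
    substY [s] (plug pY bs) = plug s bs := by
  induction bs with
  | nil => rw [plug, pY, substY]; rfl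
  | cons b bs ih => simp [plug, substY_out, ih]

lemma substY_plug_eN (ts : List (OT DE)) (bs : List Bool) :
    substY ts (plug eN bs) = plug eN bs := by
  induction bs with
  | nil => rw [plug, eN, substY_out]; rfl
  | cons b bs ih => simp [plug, substY_out, ih]

lemma plug_plug (s : OT DE) (bs1 bs2 : List Bool) :
    plug (plug s bs2) bs1 = plug s (bs1 ++ bs2) := by
  induction bs1 with
  | nil => rfl
  | cons b bs ih => simp [plug, ih]

/-- The closed uniform perfect tree with level labels `bs`. -/
def pT : List Bool → RTree DE
  | [] => .node .e []
  | b :: bs => .node (lab b) [pT bs, pT bs]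

lemma embed_pT (bs : List Bool) : embed (pT bs) = plug eN bs := by
  induction bs with
  | nil => rw [pT, embed, map_node]; rfl
  | cons b bs ih => rw [pT, embed, map_node]; simp [plug, embed] at ih ⊢; simp [ih]

lemma embed_eq_plug {t : RTree DE} {bs : List Bool} (h : embed t = plug eN bs) :
    t = pT bs := by
  induction bs generalizing t with
  | nil =>
    obtain ⟨a, ts⟩ := t
    rw [embed, map_node, plug, eN] at h
    injection h with h1 h2
    injection h1 with h1
    subst h1
    simp only [List.map_eq_nil_iff] at h2
    rw [pT, h2]
  | cons b bs ih =>
    obtain ⟨a, ts⟩ := t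
    rw [embed, map_node, plug] at h
    injection h with h1 h2
    injection h1 with h1
    subst h1
    have hl2 : ts.length = 2 := by
      have := congrArg List.length h2
      simpa using this
    match ts, h2, hl2 with
    | [t1, t2], h2, _ =>
      simp only [List.map_cons, List.map_nil, List.cons.injEq, and_true] at h2
      obtain ⟨e1, e2⟩ := h2
      rw [pT, ih e1, ih e2]

lemma pT_inj : Function.Injective pT := by
  intro bs1
  induction bs1 with
  | nil =>
    intro bs2 h
    cases bs2 with
    | nil => rfl
    | cons b bs =>
      rw [pT, pT] at h
      injection h with h1 h2
      exact absurd h1.symm (by rcases lab_or b with h | h <;> simp [h])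
  | cons b bs ih =>
    intro bs2 h
    cases bs2 with
    | nil =>
      rw [pT, pT] at h
      injection h with h1 h2
      exact absurd h1 (by rcases lab_or b with h | h <;> simp [h])
    | cons b2 bs2 =>
      rw [pT, pT] at h
      injection h with h1 h2
      injection h2 with h2 _
      rw [lab_inj h1, ih h2]

/-- Abbreviation for the rule selector of `M_ex`. -/
abbrev psel : QE → GE → List (RTree GE) → Set (Rhs DE QE) := plainSel rulesEx

lemma semIO_param_inv {Γ Δ Q : Type} {rsel : Q → Γ → List (RTree Γ) → Set (Rhs Δ Q)}
    {i : ℕ} {t : OT Δ}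
    (h : SemIO rsel (.node (.param i) []) t) : t = .node (.param i) [] := by
  cases h; rfl

lemma semIO_out_nil_inv {Γ Δ Q : Type} {rsel : Q → Γ → List (RTree Γ) → Set (Rhs Δ Q)}
    {d : Δ} {t : OT Δ}
    (h : SemIO rsel (.node (.out d) ([] : List (ST Γ Δ Q))) t) :
    t = .node (.out d) [] := by
  cases h with
  | out hlen h => rw [List.length_eq_zero_iff.mp hlen]

lemma substY_param_node {Δ : Type} (ts : List (OT Δ)) (i : ℕ) :
    substY ts (.node (.param i) []) = ts.getD i (.node (.param i) []) := by
  rw [substY]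

/-- The key lemma about the state `double`: on input `s_k` with a single
argument `u`, the outputs are exactly the trees `plug t₁ bs` where `bs` is a
list of level labels of length `2^k` and `t₁` is an output for `u`. -/
lemma key_double (k : ℕ) : ∀ (u : ST GE DE QE) (t : OT DE),
    SemIO psel (.node (.call .double (sN k)) [u]) t ↔
      ∃ (bs : List Bool) (t₁ : OT DE),
        bs.length = 2 ^ k ∧ SemIO psel u t₁ ∧ t = plug t₁ bs := by
  induction k with
  | zero =>
    intro u t
    constructor
    · intro h
      rw [show sN 0 = .node .e [] from rfl] at h
      cases h with
      | call hr h₀ hlen h =>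
        rename_i r t₀ ts
        obtain ⟨t₁, rfl⟩ := List.length_eq_one_iff.mp hlen
        have hu : SemIO psel u t₁ := by simpa using h ⟨0, by simp⟩
        simp only [psel, plainSel, rulesEx, Set.mem_insert_iff,
          Set.mem_singleton_iff] at hr
        rcases hr with rfl | rfl <;>
        · simp only [substX, map_node, RLab.subst, List.map] at h₀
          cases h₀ with
          | out hlen2 h2 =>
            rename_i ts2
            have hlen2' : ts2.length = 2 := by simpa using hlen2
            match ts2, hlen2, hlen2' with
            | [w1, w2], hlen2, _ =>
              have e1 : w1 = pY := semIO_param_inv (by simpa using h2 ⟨0, by simp⟩)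
              have e2 : w2 = pY := semIO_param_inv (by simpa using h2 ⟨1, by simp⟩)
              subst e1; subst e2
              first
              | exact ⟨[true], t₁, rfl, hu, substY_plug_pY t₁ [true]⟩
              | exact ⟨[false], t₁, rfl, hu, substY_plug_pY t₁ [false]⟩
    · rintro ⟨bs, t₁, hlen, hu, rfl⟩
      have hlen' : bs.length = 1 := by simpa using hlen
      match bs, hlen' with
      | [b], _ =>
        rw [show sN 0 = RTree.node GE.e [] from rfl,
          show plug t₁ [b] = substY [t₁] (plug pY [b]) from (substY_plug_pY _ _).symm]
        refine SemIO.call (ts := [t₁])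
          (r := .node (.out (if b then .f else .g))
            [.node (.param 0) [], .node (.param 0) []])
          ?_ ?_ rfl ?_
        · cases b <;> simp [psel, plainSel, rulesEx]
        · have hsub : substX (Γ := GE) ([] : List (RTree GE))
              (RTree.node (RLab.out (if b then DE.f else DE.g))
                [.node (.param 0) [], .node (.param 0) []] : Rhs DE QE)
              = .node (.out (lab b)) [.node (.param 0) [], .node (.param 0) []] := by
            simp [substX, map_node, RLab.subst, lab]
          rw [hsub]
          show SemIO psel _ (.node (.out (lab b)) [pY, pY])
          refine SemIO.out (ts := [pY, pY]) rfl ?_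
          intro i
          match i with
          | ⟨0, _⟩ => exact SemIO.param 0
          | ⟨1, _⟩ => exact SemIO.param 0
        · intro i
          match i with
          | ⟨0, _⟩ => exact hu
  | succ k ih =>
    have hsub : substX [sN k]
        (RTree.node (RLab.call QE.double 0)
          [.node (.call .double 0) [.node (.param 0) []]] : Rhs DE QE)
        = .node (.call .double (sN k))
            [.node (.call .double (sN k)) [.node (.param 0) []]] := by
      simp [substX, map_node, RLab.subst]
    intro u t
    constructor
    · intro h
      rw [show sN (k+1) = .node .a [sN k] from rfl] at h
      cases h with
      | call hr h₀ hlen h =>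
        rename_i r t₀ ts
        obtain ⟨t₁, rfl⟩ := List.length_eq_one_iff.mp hlen
        have hu : SemIO psel u t₁ := by simpa using h ⟨0, by simp⟩
        simp only [psel, plainSel, rulesEx, Set.mem_singleton_iff] at hr
        subst hr
        rw [hsub] at h₀
        obtain ⟨bs1, t₁', hl1, hin, rfl⟩ := (ih _ _).mp h₀
        obtain ⟨bs2, tp, hl2, hp, rfl⟩ := (ih _ _).mp hin
        have etp : tp = pY := semIO_param_inv hp
        subst etp
        refine ⟨bs1 ++ bs2, t₁, by rw [List.length_append, hl1, hl2, pow_succ]; omega,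
          hu, ?_⟩
        rw [plug_plug, substY_plug_pY]
    · rintro ⟨bs, t₁, hlen, hu, rfl⟩
      rw [show sN (k+1) = .node .a [sN k] from rfl,
        show plug t₁ bs = substY [t₁] (plug pY bs) from (substY_plug_pY _ _).symm]
      have h2k : (2:ℕ)^k ≤ 2^(k+1) := Nat.pow_le_pow_right (by norm_num) (by omega)
      refine SemIO.call (ts := [t₁]) (t₀ := plug pY bs)
        (r := .node (.call .double 0) [.node (.call .double 0) [.node (.param 0) []]])
        (by simp [psel, plainSel, rulesEx]) ?_ rfl ?_
      · rw [hsub]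
        refine (ih _ _).mpr ⟨bs.take (2^k), plug pY (bs.drop (2^k)),
          by rw [List.length_take, hlen]; exact Nat.min_eq_left h2k, ?_, ?_⟩
        · exact (ih _ _).mpr ⟨bs.drop (2^k), pY,
            by rw [List.length_drop, hlen, pow_succ]; omega, SemIO.param 0, rfl⟩
        · rw [plug_plug, List.take_append_drop]
      · intro i
        match i with
        | ⟨0, _⟩ => exact hu

/-- The outputs of `M_ex` on input `s_{n+1}` are exactly the closed uniform
perfect trees with `2^(n+1)` levels. -/
lemma key_start (n : ℕ) (T : OT DE) :
    SemIO psel (.node (.call .start (sN (n+1))) []) T ↔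
      ∃ bs : List Bool, bs.length = 2 ^ (n + 1) ∧ T = plug eN bs := by
  have hsub : substX [sN n]
      (RTree.node (RLab.call QE.double 0)
        [.node (.call .double 0) [.node (.out .e) []]] : Rhs DE QE)
      = .node (.call .double (sN n))
          [.node (.call .double (sN n)) [.node (.out .e) []]] := by
    simp [substX, map_node, RLab.subst]
  constructor
  · intro h
    rw [show sN (n+1) = .node .a [sN n] from rfl] at h
    cases h with
    | call hr h₀ hlen h =>
      rename_i r t₀ ts
      have hts : ts = [] := List.length_eq_zero_iff.mp hlen
      subst hts
      simp only [psel, plainSel, rulesEx, Set.mem_singleton_iff] at hr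
      subst hr
      rw [hsub] at h₀
      obtain ⟨bs1, t₁', hl1, hin, rfl⟩ := (key_double n _ _).mp h₀
      obtain ⟨bs2, te, hl2, he, rfl⟩ := (key_double n _ _).mp hin
      have ete : te = eN := semIO_out_nil_inv he
      subst ete
      exact ⟨bs1 ++ bs2, by rw [List.length_append, hl1, hl2, pow_succ]; omega,
        by rw [plug_plug, substY_plug_eN]⟩
  · rintro ⟨bs, hlen, rfl⟩
    rw [show sN (n+1) = .node .a [sN n] from rfl,
      show plug eN bs = substY [] (plug eN bs) from (substY_plug_eN _ _).symm]
    have h2k : (2:ℕ)^n ≤ 2^(n+1) := Nat.pow_le_pow_right (by norm_num) (by omega)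
    refine SemIO.call (ts := []) (t₀ := plug eN bs)
      (r := .node (.call .double 0) [.node (.call .double 0) [.node (.out .e) []]])
      (by simp [psel, plainSel, rulesEx]) ?_ rfl ?_
    · rw [hsub]
      refine (key_double n _ _).mpr ⟨bs.take (2^n), plug eN (bs.drop (2^n)),
        by rw [List.length_take, hlen]; exact Nat.min_eq_left h2k, ?_, ?_⟩
      · refine (key_double n _ _).mpr ⟨bs.drop (2^n), eN,
          by rw [List.length_drop, hlen, pow_succ]; omega, ?_, rfl⟩
        exact SemIO.out (ts := []) rfl (fun i => i.elim0)
      · rw [plug_plug, List.take_append_drop]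
    · intro i
      exact i.elim0

lemma perfect_pT (bs : List Bool) : Perfect bs.length (pT bs) := by
  induction bs with
  | nil => exact Perfect.leaf
  | cons b bs ih => exact Perfect.node (lab_or b) ih ih

lemma labelsAt_pT (d : ℕ) (bs : List Bool) : (labelsAt d (pT bs)).Subsingleton := by
  induction d generalizing bs with
  | zero => rw [labelsAt]; exact Set.subsingleton_singleton
  | succ d ih =>
    cases bs with
    | nil =>
      rw [pT, labelsAt]
      intro x hx y hy
      simp at hx
    | cons b bs =>
      rw [pT, labelsAt]
      intro x hx y hy
      simp only [Set.mem_setOf_eq, List.mem_cons, List.mem_singleton, List.not_mem_nil,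
        or_false] at hx hy
      obtain ⟨tx, (rfl | rfl), hx⟩ := hx <;> obtain ⟨ty, (rfl | rfl), hy⟩ := hy <;>
        exact ih bs hx hy

lemma mem_labelsAt_pT (bs : List Bool) (i : ℕ) (hi : i < bs.length) :
    lab (bs.get ⟨i, hi⟩) ∈ labelsAt i (pT bs) := by
  induction i generalizing bs with
  | zero =>
    match bs with
    | b :: bs => rw [pT, labelsAt]; rfl
  | succ i ih =>
    match bs, hi with
    | b :: bs, hi =>
      rw [pT, labelsAt]
      exact ⟨pT bs, by simp, ih bs (by simpa using hi)⟩

lemma perfect_to_pT : ∀ {h : ℕ} {t : RTree DE}, Perfect h t →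
    (∀ d : ℕ, (labelsAt d t).Subsingleton) →
    ∃ bs : List Bool, bs.length = h ∧ t = pT bs := by
  intro h t hp
  induction hp with
  | leaf => exact fun _ => ⟨[], rfl, rfl⟩
  | @node h dd l r hd hl hr ihl ihr =>
    intro hs
    have hsub : ∀ (c : RTree DE), c ∈ [l, r] → ∀ d : ℕ,
        (labelsAt d c).Subsingleton := by
      intro c hc d
      intro x hx y hy
      exact hs (d + 1) (by rw [labelsAt]; exact ⟨c, hc, hx⟩)
        (by rw [labelsAt]; exact ⟨c, hc, hy⟩)
    obtain ⟨bsl, hll, rfl⟩ := ihl (hsub l (by simp))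
    obtain ⟨bsr, hlr, rfl⟩ := ihr (hsub r (by simp))
    have hbs : bsl = bsr := by
      refine List.ext_get (by rw [hll, hlr]) ?_
      intro i h1 h2
      have m1 : lab (bsl.get ⟨i, h1⟩) ∈ labelsAt (i + 1) (.node dd [pT bsl, pT bsr]) := by
        rw [labelsAt]; exact ⟨pT bsl, by simp, mem_labelsAt_pT bsl i h1⟩
      have m2 : lab (bsr.get ⟨i, h2⟩) ∈ labelsAt (i + 1) (.node dd [pT bsl, pT bsr]) := by
        rw [labelsAt]; exact ⟨pT bsr, by simp, mem_labelsAt_pT bsr i h2⟩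
      exact lab_inj (hs (i + 1) m1 m2)
    subst hbs
    rcases hd with rfl | rfl
    · exact ⟨true :: bsl, by simp [hll], by rw [pT]; rfl⟩
    · exact ⟨false :: bsl, by simp [hll], by rw [pT]; rfl⟩

lemma pT_char (h : ℕ) (t : RTree DE) :
    (∃ bs : List Bool, bs.length = h ∧ t = pT bs) ↔
      Perfect h t ∧ ∀ d : ℕ, (labelsAt d t).Subsingleton := by
  constructor
  · rintro ⟨bs, rfl, rfl⟩
    exact ⟨perfect_pT bs, fun d => labelsAt_pT d bs⟩
  · rintro ⟨hp, hs⟩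
    exact perfect_to_pT hp hs

lemma ncard_length_set (m : ℕ) :
    Set.ncard {bs : List Bool | bs.length = m} = 2 ^ m := by
  have e : {bs : List Bool | bs.length = m} ≃ List.Vector Bool m :=
    { toFun := fun x => ⟨x.1, x.2⟩
      invFun := fun v => ⟨v.1, v.2⟩
      left_inv := fun x => rfl
      right_inv := fun v => rfl }
  rw [← Nat.card_coe_set_eq, Nat.card_congr e, Nat.card_eq_fintype_card,
    card_vector, Fintype.card_bool]

end Aux

/-- For every `n ≥ 1`, the set `⟦⟨start, s_n⟩⟧_IO` of outputs of the
mtt `M_ex` in IO-mode on input `s_n` equals the set of all perfect `{f,g}`-trees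
of height `2^n` in which any two (internal) nodes at the same depth carry the
same label; in particular, this set has cardinality `2^(2^n)`. -/
theorem io_outputs_of_Mex (n : ℕ) (hn : 1 ≤ n) :
    ({t : RTree DE | SemIO (plainSel rulesEx) (.node (.call .start (sN n)) []) (embed t)}
        = {t | Perfect (2^n) t ∧ ∀ d : ℕ, (labelsAt d t).Subsingleton}) ∧
    {t : RTree DE | SemIO (plainSel rulesEx) (.node (.call .start (sN n)) []) (embed t)}.ncard
        = 2 ^ 2 ^ n := by
  obtain ⟨m, rfl⟩ : ∃ m, n = m + 1 := ⟨n - 1, by omega⟩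
  have hset : {t : RTree DE |
        SemIO (plainSel rulesEx) (.node (.call .start (sN (m+1))) []) (embed t)}
      = pT '' {bs : List Bool | bs.length = 2 ^ (m+1)} := by
    ext t
    simp only [Set.mem_setOf_eq, Set.mem_image]
    constructor
    · intro h
      obtain ⟨bs, hlen, he⟩ := (key_start m (embed t)).mp h
      exact ⟨bs, hlen, (embed_eq_plug he).symm⟩
    · rintro ⟨bs, hlen, rfl⟩
      exact (key_start m (embed (pT bs))).mpr ⟨bs, hlen, embed_pT bs⟩
  constructor
  · rw [hset]
    ext t
    simp only [Set.mem_image, Set.mem_setOf_eq]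
    rw [← pT_char]
    constructor
    · rintro ⟨bs, hl, rfl⟩; exact ⟨bs, hl, rfl⟩
    · rintro ⟨bs, hl, rfl⟩; exact ⟨bs, hl, rfl⟩
  · rw [hset, Set.ncard_image_of_injective _ pT_inj, ncard_length_set]

end MttF
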